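/- The Bayes operator Φ is Lipschitz in the filter and observation arguments in the averaged sense: for all θ, θ' ∈ P(X) and y, y' ∈ Y, E[d_P(Φ(Y,θ,y), Φ(Y,θ',y'))] ≤ δ(r̄ + L_r)(1 + δ r̄)[d_P(θ,θ') + |y − y'|], where Y ∼ ν. -/

import Mathlib

open MeasureTheory Set
noncomputable section

abbrev Em (m : ℕ) := EuclideanSpace ℝ (Fin m)

/-- bounded Lipschitz functions with `‖f‖_sup + Lip f ≤ 1` -/
def IsLip1 {E : Type*} [PseudoMetricSpace E] (f : E → ℝ) : Prop :=
  ∃ C L : ℝ, 0 ≤ C ∧ 0 ≤ L ∧ (∀ x, |f x| ≤ C) ∧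
    (∀ x y, |f x - f y| ≤ L * dist x y) ∧ C + L ≤ 1

/-- dual bounded-Lipschitz distance on probability measures -/
noncomputable def dP {E : Type*} [PseudoMetricSpace E] [MeasurableSpace E]
    (μ ν : Measure E) : ℝ :=
  ⨆ f : {f : E → ℝ // IsLip1 f}, (∫ x, f.1 x ∂μ - ∫ x, f.1 x ∂ν)

/-- The Bayes operator `Φ(v,θ,y)(du) = r(u,v,θ,y)/r(λ,v,θ,y) λ(du)`. -/
noncomputable def BayesPhi {m n : ℕ} (r : Em m → Em n → Em m → Em n → ℝ)
    (lam : Measure (Em m)) (v : Em n) (θ : Measure (Em m)) (y : Em n) : Measure (Em m) :=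
  lam.withDensity fun u => ENNReal.ofReal
    ((∫ x, r u v x y ∂θ) / (∫ u', ∫ x, r u' v x y ∂θ ∂lam))

lemma isLip1_zero {E : Type*} [PseudoMetricSpace E] : IsLip1 (fun _ : E => (0:ℝ)) :=
  ⟨0, 0, le_rfl, le_rfl, fun _ => by simp, fun _ _ => by simp [dist_nonneg], by norm_num⟩

lemma isLip1_one {E : Type*} [PseudoMetricSpace E] : IsLip1 (fun _ : E => (1:ℝ)) :=
  ⟨1, 0, zero_le_one, le_rfl, fun _ => by simp, fun _ _ => by simp, by norm_num⟩

lemma isLip1_div {E : Type*} [PseudoMetricSpace E] {h : E → ℝ} {B L : ℝ}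
    (hB : 0 ≤ B) (hL : 0 ≤ L) (hpos : 0 < B + L)
    (hbd : ∀ x, |h x| ≤ B) (hlip : ∀ x y, |h x - h y| ≤ L * dist x y) :
    IsLip1 (fun x => h x / (B + L)) := by
  refine ⟨B / (B + L), L / (B + L), by positivity, by positivity, ?_, ?_, ?_⟩
  · intro x
    rw [abs_div, abs_of_pos hpos]
    exact div_le_div_of_nonneg_right (hbd x) hpos.le
  · intro x z
    rw [div_sub_div_same, abs_div, abs_of_pos hpos, div_mul_eq_mul_div]
    exact div_le_div_of_nonneg_right (hlip x z) hpos.le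
  · rw [← add_div, div_self hpos.ne']

lemma integrable_of_bdd {α : Type*} [MeasurableSpace α] {μ : Measure α} [IsFiniteMeasure μ]
    {f : α → ℝ} (hf : AEStronglyMeasurable f μ) {C : ℝ} (h : ∀ a, |f a| ≤ C) :
    Integrable f μ :=
  ⟨hf, HasFiniteIntegral.of_bounded (C := C) (Filter.Eventually.of_forall fun a => by
    simpa [Real.norm_eq_abs] using h a)⟩

lemma abs_integral_le_of_bdd {α : Type*} [MeasurableSpace α] {μ : Measure α}
    [IsProbabilityMeasure μ] {f : α → ℝ} {C : ℝ} (h : ∀ a, |f a| ≤ C) :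
    |∫ a, f a ∂μ| ≤ C := by
  have := norm_integral_le_of_norm_le_const (μ := μ) (f := f) (C := C)
    (Filter.Eventually.of_forall fun a => by simpa [Real.norm_eq_abs] using h a)
  simpa [Real.norm_eq_abs] using this

lemma le_dP {E : Type*} [PseudoMetricSpace E] [MeasurableSpace E] {μ ν : Measure E}
    [IsProbabilityMeasure μ] [IsProbabilityMeasure ν] {f : E → ℝ} (hf : IsLip1 f) :
    (∫ x, f x ∂μ) - ∫ x, f x ∂ν ≤ dP μ ν := by
  have hbdd : BddAbove (Set.range fun g : {g : E → ℝ // IsLip1 g} =>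
      (∫ x, g.1 x ∂μ) - ∫ x, g.1 x ∂ν) := by
    refine ⟨2, ?_⟩
    rintro _ ⟨⟨g, C, L, hC, hL, hgb, hgl, hsum⟩, rfl⟩
    have hC1 : C ≤ 1 := by linarith
    have h1 : |∫ x, g x ∂μ| ≤ 1 :=
      (abs_integral_le_of_bdd hgb).trans hC1
    have h2 : |∫ x, g x ∂ν| ≤ 1 :=
      (abs_integral_le_of_bdd hgb).trans hC1
    have := abs_le.1 h1; have := abs_le.1 h2
    simp only
    linarith [this.1, this.2]
  exact le_ciSup hbdd (⟨f, hf⟩ : {g : E → ℝ // IsLip1 g})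

lemma dP_nonneg {E : Type*} [PseudoMetricSpace E] [MeasurableSpace E] {μ ν : Measure E}
    [IsProbabilityMeasure μ] [IsProbabilityMeasure ν] : 0 ≤ dP μ ν := by
  have := le_dP (μ := μ) (ν := ν) isLip1_zero
  simpa using this

lemma isLip1.measurable {E : Type*} [MeasurableSpace E] [PseudoMetricSpace E] [BorelSpace E]
    {f : E → ℝ} (hf : IsLip1 f) : Measurable f := by
  obtain ⟨C, L, hC, hL, hfb, hfl, hsum⟩ := hf
  have : LipschitzWith (Real.toNNReal L) f := by
    intro x y
    rw [edist_dist, edist_dist, Real.dist_eq]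
    calc ENNReal.ofReal |f x - f y| ≤ ENNReal.ofReal (L * dist x y) :=
          ENNReal.ofReal_le_ofReal (hfl x y)
      _ = ENNReal.ofReal L * ENNReal.ofReal (dist x y) :=
          ENNReal.ofReal_mul hL
      _ = _ := rfl
  exact this.continuous.measurable

section core
variable {m n : ℕ} {Lr δ rbar : ℝ}
  {r : Em m → Em n → Em m → Em n → ℝ}
  {lam : Measure (Em m)} [IsProbabilityMeasure lam]

lemma hmeas_pair
    (hr_meas : Measurable fun p : (Em m × Em n) × Em m × Em n => r p.1.1 p.1.2 p.2.1 p.2.2)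
    (v y : Em n) : Measurable fun p : Em m × Em m => r p.1 v p.2 y :=
  hr_meas.comp ((measurable_fst.prodMk measurable_const).prodMk
    (measurable_snd.prodMk measurable_const))

lemma hmeas_u
    (hr_meas : Measurable fun p : (Em m × Em n) × Em m × Em n => r p.1.1 p.1.2 p.2.1 p.2.2)
    (v : Em n) (x : Em m) (y : Em n) : Measurable fun u => r u v x y :=
  (hmeas_pair hr_meas v y).comp (measurable_id.prodMk measurable_const)

-- measurability of x ↦ ∫ u, r u v x y * f u ∂lam
lemma Hmeas
    (hr_meas : Measurable fun p : (Em m × Em n) × Em m × Em n => r p.1.1 p.1.2 p.2.1 p.2.2)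
    (v : Em n) (y : Em n) {f : Em m → ℝ} (hfm : Measurable f) :
    Measurable fun x : Em m => ∫ u, r u v x y * f u ∂lam := by
  have hF : StronglyMeasurable fun p : Em m × Em m => r p.2 v p.1 y * f p.2 :=
    (((hmeas_pair hr_meas v y).comp measurable_swap).mul
      (hfm.comp measurable_snd)).stronglyMeasurable
  exact hF.integral_prod_right'.measurable


variable (hr_meas : Measurable fun p : (Em m × Em n) × Em m × Em n => r p.1.1 p.1.2 p.2.1 p.2.2)
  (hr_nonneg : ∀ u v x y, 0 ≤ r u v x y)
  (hr_bdd : ∀ u v x y, r u v x y ≤ rbar)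
  (hr_lip : ∀ u u' v x x' y y',
      |r u v x y - r u' v x' y'| ≤ Lr * (dist u u' + dist x x' + dist y y'))

set_option linter.unusedSectionVars false
include hr_meas hr_nonneg hr_bdd hr_lip

lemma rf_bd (hrbar0 : 0 ≤ rbar) {f : Em m → ℝ} (hfb : ∀ u, |f u| ≤ 1)
    (u : Em m) (v : Em n) (x : Em m) (y : Em n) : |r u v x y * f u| ≤ rbar := by
  rw [abs_mul, abs_of_nonneg (hr_nonneg u v x y)]
  calc r u v x y * |f u| ≤ rbar * 1 :=
        mul_le_mul (hr_bdd u v x y) (hfb u) (abs_nonneg _) hrbar0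
    _ = rbar := mul_one _

lemma Hbd (hrbar0 : 0 ≤ rbar) {f : Em m → ℝ} (hfb : ∀ u, |f u| ≤ 1)
    (v : Em n) (x : Em m) (y : Em n) :
    |∫ u, r u v x y * f u ∂lam| ≤ rbar :=
  abs_integral_le_of_bdd (fun u => rf_bd hr_meas hr_nonneg hr_bdd hr_lip hrbar0 hfb u v x y)

lemma rf_int (hrbar0 : 0 ≤ rbar) {f : Em m → ℝ} (hfm : Measurable f)
    (hfb : ∀ u, |f u| ≤ 1) (v : Em n) (x : Em m) (y : Em n) :
    Integrable (fun u => r u v x y * f u) lam :=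
  integrable_of_bdd (((hmeas_u hr_meas v x y).mul hfm).aestronglyMeasurable)
    (fun u => rf_bd hr_meas hr_nonneg hr_bdd hr_lip hrbar0 hfb u v x y)

lemma Hdiff (hrbar0 : 0 ≤ rbar) {f : Em m → ℝ} (hfm : Measurable f)
    (hfb : ∀ u, |f u| ≤ 1) (v : Em n) (x x' : Em m) (y y' : Em n) :
    |(∫ u, r u v x y * f u ∂lam) - ∫ u, r u v x' y' * f u ∂lam|
      ≤ Lr * (dist x x' + dist y y') := by
  rw [← integral_sub (rf_int hr_meas hr_nonneg hr_bdd hr_lip hrbar0 hfm hfb v x y)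
    (rf_int hr_meas hr_nonneg hr_bdd hr_lip hrbar0 hfm hfb v x' y')]
  refine abs_integral_le_of_bdd fun u => ?_
  rw [← sub_mul, abs_mul]
  calc |r u v x y - r u v x' y'| * |f u| ≤ (Lr * (dist x x' + dist y y')) * 1 := by
        refine mul_le_mul ?_ (hfb u) (abs_nonneg _) ?_
        · have := hr_lip u u v x x' y y'
          simpa [dist_self] using this
        · have h := (abs_nonneg (r u v x y - r u v x' y')).trans
            (by simpa [dist_self] using hr_lip u u v x x' y y')
          exact h
    _ = _ := mul_one _

lemma diff_bound (hrbar0 : 0 ≤ rbar) (hLr : 0 < Lr)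
    (θ θ' : Measure (Em m)) [IsProbabilityMeasure θ] [IsProbabilityMeasure θ']
    (v : Em n) (y y' : Em n) {f : Em m → ℝ} (hfm : Measurable f) (hfb : ∀ u, |f u| ≤ 1) :
    |(∫ x, (∫ u, r u v x y * f u ∂lam) ∂θ) - ∫ x, (∫ u, r u v x y' * f u ∂lam) ∂θ'|
      ≤ (rbar + Lr) * (dP θ θ' + dist y y') := by
  set H : Em m → ℝ := fun x => ∫ u, r u v x y * f u ∂lam with hH
  set H' : Em m → ℝ := fun x => ∫ u, r u v x y' * f u ∂lam with hH'
  have hpos : 0 < rbar + Lr := by linarith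
  have hHbd : ∀ x, |H x| ≤ rbar := fun x => Hbd hr_meas hr_nonneg hr_bdd hr_lip hrbar0 hfb v x y
  have hH'bd : ∀ x, |H' x| ≤ rbar := fun x => Hbd hr_meas hr_nonneg hr_bdd hr_lip hrbar0 hfb v x y'
  have hHlip : ∀ x x', |H x - H x'| ≤ Lr * dist x x' := fun x x' => by
    have := Hdiff (lam := lam) hr_meas hr_nonneg hr_bdd hr_lip hrbar0 hfm hfb v x x' y y
    simpa [dist_self] using this
  have hHmeas : Measurable H := Hmeas hr_meas v y hfm
  have hH'meas : Measurable H' := Hmeas hr_meas v y' hfm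
  -- step 1: |∫ H dθ - ∫ H dθ'| ≤ (rbar+Lr) * dP θ θ'
  have gen : ∀ G : Em m → ℝ, (∀ x, |G x| ≤ rbar) → (∀ x x', |G x - G x'| ≤ Lr * dist x x') →
      (∫ x, G x ∂θ) - ∫ x, G x ∂θ' ≤ (rbar + Lr) * dP θ θ' := by
    intro G hGb hGl
    have l := le_dP (μ := θ) (ν := θ') (isLip1_div hrbar0 hLr.le hpos hGb hGl)
    simp only [integral_div, div_sub_div_same] at l
    rw [mul_comm]
    exact (div_le_iff₀ hpos).mp l
  have step1 : |(∫ x, H x ∂θ) - ∫ x, H x ∂θ'| ≤ (rbar + Lr) * dP θ θ' := by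
    rw [abs_le]
    refine ⟨?_, gen H hHbd hHlip⟩
    have := gen (fun x => -H x) (fun x => by rw [abs_neg]; exact hHbd x)
      (fun x x' => by
        rw [show -H x - -H x' = -(H x - H x') by ring, abs_neg]; exact hHlip x x')
    simp only [integral_neg] at this
    linarith
  -- step 2: |∫ H dθ' - ∫ H' dθ'| ≤ Lr * dist y y'
  have step2 : |(∫ x, H x ∂θ') - ∫ x, H' x ∂θ'| ≤ Lr * dist y y' := by
    rw [← integral_sub
      (integrable_of_bdd hHmeas.aestronglyMeasurable hHbd)
      (integrable_of_bdd hH'meas.aestronglyMeasurable hH'bd)]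
    refine abs_integral_le_of_bdd fun x => ?_
    have := Hdiff (lam := lam) hr_meas hr_nonneg hr_bdd hr_lip hrbar0 hfm hfb v x x y y'
    simpa [dist_self] using this
  have hdP : 0 ≤ dP θ θ' := dP_nonneg
  have hd : 0 ≤ dist y y' := dist_nonneg
  calc |(∫ x, H x ∂θ) - ∫ x, H' x ∂θ'|
      ≤ |(∫ x, H x ∂θ) - ∫ x, H x ∂θ'| + |(∫ x, H x ∂θ') - ∫ x, H' x ∂θ'| :=
        abs_sub_le _ _ _
    _ ≤ (rbar + Lr) * dP θ θ' + Lr * dist y y' := add_le_add step1 step2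
    _ ≤ (rbar + Lr) * (dP θ θ' + dist y y') := by nlinarith

lemma phi_repr (hδ : 0 < δ) (hrbar0 : 0 ≤ rbar)
    (hlow : ∀ (v : Em n) (x : Em m) (y : Em n), δ⁻¹ ≤ ∫ u, r u v x y ∂lam)
    (θ : Measure (Em m)) [IsProbabilityMeasure θ] (v : Em n) (y : Em n)
    {f : Em m → ℝ} (hfm : Measurable f) (hfb : ∀ u, |f u| ≤ 1) :
    ∫ u, f u ∂(BayesPhi r lam v θ y)
      = (∫ x, (∫ u, r u v x y * f u ∂lam) ∂θ) / (∫ x, (∫ u, r u v x y ∂lam) ∂θ) := by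
  have hgmeas : Measurable fun u => ∫ x, r u v x y ∂θ := by
    have hF : StronglyMeasurable fun p : Em m × Em m => r p.1 v p.2 y :=
      (hmeas_pair hr_meas v y).stronglyMeasurable
    exact hF.integral_prod_right'.measurable
  have hg0 : ∀ u, 0 ≤ ∫ x, r u v x y ∂θ := fun u =>
    integral_nonneg fun x => hr_nonneg u v x y
  have hinner_meas : Measurable fun x : Em m => ∫ u, r u v x y ∂lam := by
    have hF : StronglyMeasurable fun p : Em m × Em m => r p.2 v p.1 y :=
      ((hmeas_pair hr_meas v y).comp measurable_swap).stronglyMeasurable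
    exact hF.integral_prod_right'.measurable
  have hinner_bd : ∀ x, |∫ u, r u v x y ∂lam| ≤ rbar := fun x =>
    abs_integral_le_of_bdd fun u => by
      rw [abs_of_nonneg (hr_nonneg u v x y)]; exact hr_bdd u v x y
  have hswap : ∀ φ : Em m → ℝ, Measurable φ → (∀ u, |φ u| ≤ 1) →
      (∫ u, ∫ x, r u v x y * φ u ∂θ ∂lam) = ∫ x, ∫ u, r u v x y * φ u ∂lam ∂θ := by
    intro φ hφm hφb
    refine integral_integral_swap ?_
    refine integrable_of_bdd (C := rbar) ?_ fun p => ?_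
    · exact ((hmeas_pair hr_meas v y).mul (hφm.comp measurable_fst)).aestronglyMeasurable
    · exact rf_bd hr_meas hr_nonneg hr_bdd hr_lip hrbar0 hφb p.1 v p.2 y
  have hZswap : (∫ u', ∫ x, r u' v x y ∂θ ∂lam) = ∫ x, (∫ u, r u v x y ∂lam) ∂θ := by
    have := hswap (fun _ => 1) measurable_const (by norm_num)
    simpa [mul_one] using this
  have hDlow : δ⁻¹ ≤ ∫ x, (∫ u, r u v x y ∂lam) ∂θ := by
    have h1 : (∫ _x : Em m, (δ⁻¹ : ℝ) ∂θ) ≤ ∫ x, (∫ u, r u v x y ∂lam) ∂θ :=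
      integral_mono (integrable_const _)
        (integrable_of_bdd hinner_meas.aestronglyMeasurable hinner_bd)
        (fun x => hlow v x y)
    simpa using h1
  have hZpos : 0 < ∫ u', ∫ x, r u' v x y ∂θ ∂lam := by
    rw [hZswap]; exact lt_of_lt_of_le (by positivity) hDlow
  have key : ∫ u, f u ∂(BayesPhi r lam v θ y)
      = (∫ u, (∫ x, r u v x y ∂θ) * f u ∂lam) / (∫ u', ∫ x, r u' v x y ∂θ ∂lam) := by
    rw [BayesPhi]
    have hrfl : (fun u => ENNReal.ofReal
          ((∫ x, r u v x y ∂θ) / (∫ u', ∫ x, r u' v x y ∂θ ∂lam)))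
        = fun u => ((Real.toNNReal
          ((∫ x, r u v x y ∂θ) / (∫ u', ∫ x, r u' v x y ∂θ ∂lam)) : NNReal) : ENNReal) := rfl
    rw [hrfl, integral_withDensity_eq_integral_smul
      ((hgmeas.div_const _).real_toNNReal)]
    rw [← integral_div]
    refine integral_congr_ae (Filter.Eventually.of_forall fun u => ?_)
    have hnn := div_nonneg (hg0 u) hZpos.le
    simp only [NNReal.smul_def, Real.coe_toNNReal _ hnn, smul_eq_mul]
    ring
  have hnum : (∫ u, (∫ x, r u v x y ∂θ) * f u ∂lam)
      = ∫ x, (∫ u, r u v x y * f u ∂lam) ∂θ := by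
    have e : (fun u => (∫ x, r u v x y ∂θ) * f u)
        = fun u => ∫ x, r u v x y * f u ∂θ :=
      funext fun u => (integral_mul_const (f u) fun x => r u v x y).symm
    rw [e]
    exact hswap f hfm hfb
  rw [key, hnum, hZswap]

lemma D_low (hδ : 0 < δ) (hrbar0 : 0 ≤ rbar)
    (hlow : ∀ (v : Em n) (x : Em m) (y : Em n), δ⁻¹ ≤ ∫ u, r u v x y ∂lam)
    (θ : Measure (Em m)) [IsProbabilityMeasure θ] (v : Em n) (y : Em n) :
    δ⁻¹ ≤ ∫ x, (∫ u, r u v x y ∂lam) ∂θ := by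
  have hinner_meas : Measurable fun x : Em m => ∫ u, r u v x y ∂lam := by
    have hF : StronglyMeasurable fun p : Em m × Em m => r p.2 v p.1 y :=
      ((hmeas_pair hr_meas v y).comp measurable_swap).stronglyMeasurable
    exact hF.integral_prod_right'.measurable
  have hinner_bd : ∀ x, |∫ u, r u v x y ∂lam| ≤ rbar := fun x =>
    abs_integral_le_of_bdd fun u => by
      rw [abs_of_nonneg (hr_nonneg u v x y)]; exact hr_bdd u v x y
  have h1 : (∫ _x : Em m, (δ⁻¹ : ℝ) ∂θ) ≤ ∫ x, (∫ u, r u v x y ∂lam) ∂θ :=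
    integral_mono (integrable_const _)
      (integrable_of_bdd hinner_meas.aestronglyMeasurable hinner_bd)
      (fun x => hlow v x y)
  simpa using h1

lemma N_bd (hrbar0 : 0 ≤ rbar)
    (θ : Measure (Em m)) [IsProbabilityMeasure θ] (v : Em n) (y : Em n)
    {f : Em m → ℝ} (hfb : ∀ u, |f u| ≤ 1) :
    |∫ x, (∫ u, r u v x y * f u ∂lam) ∂θ| ≤ rbar :=
  abs_integral_le_of_bdd fun x => Hbd hr_meas hr_nonneg hr_bdd hr_lip hrbar0 hfb v x y

lemma perf (hδ : 0 < δ) (hLr : 0 < Lr) (hrbar0 : 0 ≤ rbar)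
    (hlow : ∀ (v : Em n) (x : Em m) (y : Em n), δ⁻¹ ≤ ∫ u, r u v x y ∂lam)
    (θ θ' : Measure (Em m)) [IsProbabilityMeasure θ] [IsProbabilityMeasure θ']
    (v : Em n) (y y' : Em n) {f : Em m → ℝ} (hf : IsLip1 f) :
    (∫ u, f u ∂(BayesPhi r lam v θ y)) - ∫ u, f u ∂(BayesPhi r lam v θ' y')
      ≤ δ * (rbar + Lr) * (1 + δ * rbar) * (dP θ θ' + dist y y') := by
  have hfm : Measurable f := isLip1.measurable hf
  have hfb : ∀ u, |f u| ≤ 1 := by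
    obtain ⟨C, L, hC, hL, hfb, _, hsum⟩ := hf
    exact fun u => (hfb u).trans (by linarith)
  rw [phi_repr hr_meas hr_nonneg hr_bdd hr_lip hδ hrbar0 hlow θ v y hfm hfb,
    phi_repr hr_meas hr_nonneg hr_bdd hr_lip hδ hrbar0 hlow θ' v y' hfm hfb]
  set N := ∫ x, (∫ u, r u v x y * f u ∂lam) ∂θ with hNdef
  set N' := ∫ x, (∫ u, r u v x y' * f u ∂lam) ∂θ' with hN'def
  set D := ∫ x, (∫ u, r u v x y ∂lam) ∂θ with hDdef
  set D' := ∫ x, (∫ u, r u v x y' ∂lam) ∂θ' with hD'def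
  set M := (rbar + Lr) * (dP θ θ' + dist y y') with hMdef
  have hM0 : 0 ≤ M := mul_nonneg (by linarith)
    (add_nonneg (dP_nonneg (μ := θ) (ν := θ')) dist_nonneg)
  have hDlow : δ⁻¹ ≤ D := D_low hr_meas hr_nonneg hr_bdd hr_lip hδ hrbar0 hlow θ v y
  have hD'low : δ⁻¹ ≤ D' := D_low hr_meas hr_nonneg hr_bdd hr_lip hδ hrbar0 hlow θ' v y'
  have hDpos : 0 < D := lt_of_lt_of_le (by positivity) hDlow
  have hD'pos : 0 < D' := lt_of_lt_of_le (by positivity) hD'low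
  have hDinv : D⁻¹ ≤ δ := by
    have := inv_anti₀ (by positivity) hDlow
    rwa [inv_inv] at this
  have hD'inv : D'⁻¹ ≤ δ := by
    have := inv_anti₀ (by positivity) hD'low
    rwa [inv_inv] at this
  have hN'bd : |N'| ≤ rbar := N_bd hr_meas hr_nonneg hr_bdd hr_lip hrbar0 θ' v y' hfb
  have hNN' : |N - N'| ≤ M :=
    diff_bound hr_meas hr_nonneg hr_bdd hr_lip hrbar0 hLr θ θ' v y y' hfm hfb
  have hDD' : |D - D'| ≤ M := by
    have := diff_bound (lam := lam) hr_meas hr_nonneg hr_bdd hr_lip hrbar0 hLr θ θ' v y y'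
      (f := fun _ => 1) measurable_const (by norm_num)
    simpa [mul_one] using this
  have hsplit : N / D - N' / D' = (N - N') * D⁻¹ + N' * (D' - D) * (D * D')⁻¹ := by
    field_simp
    ring
  calc N / D - N' / D' ≤ |N / D - N' / D'| := le_abs_self _
    _ = |(N - N') * D⁻¹ + N' * (D' - D) * (D * D')⁻¹| := by rw [hsplit]
    _ ≤ |N - N'| * D⁻¹ + |N'| * |D' - D| * (D * D')⁻¹ := by
        refine (abs_add_le _ _).trans ?_
        rw [abs_mul, abs_mul, abs_mul, abs_of_pos (inv_pos.2 hDpos),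
          abs_of_pos (inv_pos.2 (mul_pos hDpos hD'pos))]
    _ ≤ M * δ + (rbar * M) * (δ * δ) := by
        have h1 : |N - N'| * D⁻¹ ≤ M * δ :=
          mul_le_mul hNN' hDinv (inv_nonneg.2 hDpos.le) hM0
        have h2 : (D * D')⁻¹ ≤ δ * δ := by
          rw [mul_inv]
          exact mul_le_mul hDinv hD'inv (inv_nonneg.2 hD'pos.le) hδ.le
        have h3 : |N'| * |D' - D| ≤ rbar * M :=
          mul_le_mul hN'bd (abs_sub_comm D' D ▸ hDD') (abs_nonneg _) hrbar0
        have h4 : |N'| * |D' - D| * (D * D')⁻¹ ≤ (rbar * M) * (δ * δ) :=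
          mul_le_mul h3 h2 (inv_nonneg.2 (mul_pos hDpos hD'pos).le)
            (mul_nonneg hrbar0 hM0)
        linarith
    _ = δ * (rbar + Lr) * (1 + δ * rbar) * (dP θ θ' + dist y y') := by
        rw [hMdef]; ring


end core

theorem stmt_4 {m n : ℕ} (Lr δ rbar : ℝ) (hLr : 0 < Lr) (hδ : 0 < δ)
    (r : Em m → Em n → Em m → Em n → ℝ)
    (lam : Measure (Em m)) (nu : Measure (Em n))
    [IsProbabilityMeasure lam] [IsProbabilityMeasure nu]
    (hr_meas : Measurable fun p : (Em m × Em n) × Em m × Em n => r p.1.1 p.1.2 p.2.1 p.2.2)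
    (hr_nonneg : ∀ u v x y, 0 ≤ r u v x y)
    (hr_bdd : ∀ u v x y, r u v x y ≤ rbar)
    (hr_lip : ∀ u u' v x x' y y',
      |r u v x y - r u' v x' y'| ≤ Lr * (dist u u' + dist x x' + dist y y'))
    (hr_int : ∀ x y, ∫ u, ∫ v, r u v x y ∂nu ∂lam = 1)
    (hlow : ∀ (v : Em n) (x : Em m) (y : Em n), δ⁻¹ ≤ ∫ u, r u v x y ∂lam) :
    ∀ (θ θ' : Measure (Em m)), IsProbabilityMeasure θ → IsProbabilityMeasure θ' →
    ∀ (y y' : Em n),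
      (∫ v, dP (BayesPhi r lam v θ y) (BayesPhi r lam v θ' y') ∂nu)
        ≤ δ * (rbar + Lr) * (1 + δ * rbar) * (dP θ θ' + dist y y') := by
  intro θ θ' hθ hθ' y y'
  haveI := hθ; haveI := hθ'
  have hrbar0 : 0 ≤ rbar := le_trans (hr_nonneg 0 0 0 0) (hr_bdd 0 0 0 0)
  set K := δ * (rbar + Lr) * (1 + δ * rbar) * (dP θ θ' + dist y y') with hK
  have hK0 : 0 ≤ K := by
    refine mul_nonneg (mul_nonneg (mul_nonneg hδ.le (by linarith)) (by positivity))
      (add_nonneg (dP_nonneg (μ := θ) (ν := θ')) dist_nonneg)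
  have hpt : ∀ v, dP (BayesPhi r lam v θ y) (BayesPhi r lam v θ' y') ≤ K := by
    intro v
    rw [dP]
    haveI : Nonempty {f : Em m → ℝ // IsLip1 f} := ⟨⟨fun _ => 0, isLip1_zero⟩⟩
    refine ciSup_le fun f => ?_
    exact perf hr_meas hr_nonneg hr_bdd hr_lip hδ hLr hrbar0 hlow θ θ' v y y' f.2
  by_cases hint : Integrable
      (fun v => dP (BayesPhi r lam v θ y) (BayesPhi r lam v θ' y')) nu
  · calc (∫ v, dP (BayesPhi r lam v θ y) (BayesPhi r lam v θ' y') ∂nu)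
        ≤ ∫ _v, K ∂nu := integral_mono hint (integrable_const K) hpt
      _ = K := by simp
  · rw [integral_undef hint]
    exact hK0
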